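/- Suppose for each flight i there is a chosen slot σ(i) ∈ W(i), prices p: B → ℝ≥0, and values t: A → ℝ≥0 such that (a) t_i = p_{σ(i)} + α_i d_i(σ(i)) for all i, (b) t_i ≤ p_s + α_i d_i(s) for all i and all s ∈ W(i), (c) the capacity constraints |σ^{-1}(s)| ≤ c(s) hold, and (d) p_s = 0 whenever |σ^{-1}(s)| < c(s). Then σ minimizes total delay cost Σ_i α_i d_i(σ(i)) among all feasible integral schedules. -/
import Mathlib

lemma sum_comp_fiber {A B : Type*} [Fintype A] [Fintype B] [DecidableEq B]
    (f : A → B) (p : B → ℝ) :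
    ∑ i, p (f i) = ∑ s, ((Finset.univ.filter (fun i => f i = s)).card : ℝ) * p s := by
  rw [← Finset.sum_fiberwise Finset.univ f (fun i => p (f i))]
  refine Finset.sum_congr rfl fun s _ => ?_
  rw [Finset.sum_congr rfl (fun i hi => by
    rw [(Finset.mem_filter.mp hi).2]), Finset.sum_const, nsmul_eq_mul]

/-- First-welfare-theorem-style result: an equilibrium landing schedule with
prices `p` and costs `t` (conditions (a)–(d)) minimizes the total delay cost
among all feasible integral schedules. -/
theorem stmt_8 {A B : Type*} [Fintype A] [Fintype B] [DecidableEq B]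
    (W : A → Finset B) (α : A → ℝ) (d : A → B → ℝ) (c : B → ℕ)
    (hα : ∀ i, 0 ≤ α i) (hd : ∀ i, ∀ s ∈ W i, 0 ≤ d i s)
    (σ : A → B) (p : B → ℝ) (t : A → ℝ)
    (hσW : ∀ i, σ i ∈ W i)
    (hp0 : ∀ s, 0 ≤ p s) (ht0 : ∀ i, 0 ≤ t i)
    -- (a) the cost of flight i at its assigned slot
    (ha : ∀ i, t i = p (σ i) + α i * d i (σ i))
    -- (b) each flight minimizes total cost
    (hb : ∀ i, ∀ s ∈ W i, t i ≤ p s + α i * d i s)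
    -- (c) capacity constraints
    (hc : ∀ s, (Finset.univ.filter (fun i => σ i = s)).card ≤ c s)
    -- (d) unsaturated slots have zero price
    (hd0 : ∀ s, (Finset.univ.filter (fun i => σ i = s)).card < c s → p s = 0) :
    ∀ τ : A → B, (∀ i, τ i ∈ W i) →
      (∀ s, (Finset.univ.filter (fun i => τ i = s)).card ≤ c s) →
      ∑ i, α i * d i (σ i) ≤ ∑ i, α i * d i (τ i) := by
  intro τ hτW hτc
  have h1 : ∑ i, (p (σ i) + α i * d i (σ i)) ≤ ∑ i, (p (τ i) + α i * d i (τ i)) := by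
    refine Finset.sum_le_sum fun i _ => ?_
    rw [← ha i]; exact hb i (τ i) (hτW i)
  rw [Finset.sum_add_distrib, Finset.sum_add_distrib] at h1
  have hσp : ∑ i, p (σ i) = ∑ s, (c s : ℝ) * p s := by
    rw [sum_comp_fiber]
    refine Finset.sum_congr rfl fun s _ => ?_
    rcases lt_or_eq_of_le (hc s) with h | h
    · rw [hd0 s h, mul_zero, mul_zero]
    · rw [h]
  have hτp : ∑ i, p (τ i) ≤ ∑ s, (c s : ℝ) * p s := by
    rw [sum_comp_fiber]
    exact Finset.sum_le_sum fun s _ =>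
      mul_le_mul_of_nonneg_right (Nat.cast_le.mpr (hτc s)) (hp0 s)
  linarith
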